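/- Suppose U is an orthogonal transformation of ℝ^d such that ‖x‖_2 ≤ (4R²/√d)(‖U^{-1}x‖_1 + ‖x‖_1) for all x ∈ ℝ^d, where R ≤ √(2e/π). Let V̄₊ = {e_1,...,e_d, Ue_1,...,Ue_d} ⊂ ℝ^d. Then every dominant subset of V̄₊ has size at least d/(2⁷R⁴) ≥ d/400. -/
import Mathlib

lemma kasin_aux_numeric (R : ℝ) (hR0 : 0 < R)
    (hRb : R ≤ Real.sqrt (2 * Real.exp 1 / Real.pi)) :
    (2 : ℝ) ^ 7 * R ^ 4 ≤ 400 := by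
  have hpi : (0 : ℝ) < Real.pi := Real.pi_pos
  have harg : (0 : ℝ) ≤ 2 * Real.exp 1 / Real.pi := by positivity
  have hR2b : R ^ 2 ≤ 2 * Real.exp 1 / Real.pi := by
    have h := pow_le_pow_left₀ hR0.le hRb 2
    rwa [Real.sq_sqrt harg] at h
  have he : Real.exp 1 < 2.7182818286 := Real.exp_one_lt_d9
  have hp : 3.141592 < Real.pi := Real.pi_gt_d6
  have he0 : 0 < Real.exp 1 := Real.exp_pos 1
  have h1 : R ^ 4 ≤ (2 * Real.exp 1 / Real.pi) ^ 2 := by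
    nlinarith [sq_nonneg R]
  have h2 : (2 * Real.exp 1 / Real.pi) ^ 2 ≤ 400 / 2 ^ 7 := by
    rw [div_pow, div_le_div_iff₀ (by positivity) (by norm_num)]
    nlinarith
  nlinarith


/-- With a Kašin-type orthogonal transformation U, every dominant subset of
{e_1,...,e_d, Ue_1,...,Ue_d} has size at least d/(2⁷R⁴) ≥ d/400. -/
theorem kasin_configuration_dominant_subsets_large
    (d : ℕ) (hd : 1 ≤ d) (U : (Fin d → ℝ) ≃ₗ[ℝ] (Fin d → ℝ))
    (hU : ∀ x y : Fin d → ℝ, ∑ i, U x i * U y i = ∑ i, x i * y i)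
    (R : ℝ) (hR0 : 0 < R) (hRb : R ≤ Real.sqrt (2 * Real.exp 1 / Real.pi))
    (hK : ∀ x : Fin d → ℝ, Real.sqrt (∑ i, (x i) ^ 2) ≤
      (4 * R ^ 2 / Real.sqrt d) * ((∑ i, |U.symm x i|) + ∑ i, |x i|))
    (w : Fin d ⊕ Fin d → (Fin d → ℝ))
    (hw1 : ∀ i, w (Sum.inl i) = Pi.single i 1)
    (hw2 : ∀ i, w (Sum.inr i) = U (Pi.single i 1)) :
    ∀ S : Finset (Fin d ⊕ Fin d),
      (∃ u : Fin d → ℝ, u ≠ 0 ∧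
        (1 / 2) * ∑ j : Fin d ⊕ Fin d, |∑ l, w j l * u l| ≤ ∑ j ∈ S, |∑ l, w j l * u l|) →
      (d : ℝ) / (2 ^ 7 * R ^ 4) ≤ S.card ∧ (d : ℝ) / 400 ≤ (d : ℝ) / (2 ^ 7 * R ^ 4) := by
  intro S hSdom
  obtain ⟨u, hu0, hS⟩ := hSdom
  set v := U.symm u with hvdef
  have huv : U v = u := U.apply_symm_apply u
  have hinl : ∀ i, (∑ l, w (Sum.inl i) l * u l) = u i := by
    intro i
    rw [hw1]
    simp [Pi.single_apply, Finset.sum_ite_eq']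
  have hinr : ∀ i, (∑ l, w (Sum.inr i) l * u l) = v i := by
    intro i
    rw [hw2, ← huv, hU (Pi.single i 1) v]
    simp [Pi.single_apply, Finset.sum_ite_eq']
  -- norms
  have hvu : (∑ i, v i ^ 2) = ∑ i, u i ^ 2 := by
    have := hU v v
    rw [huv] at this
    simpa [pow_two] using this.symm
  have hu2pos : 0 < ∑ i, u i ^ 2 := by
    rcases Function.ne_iff.mp hu0 with ⟨i, hi⟩
    have : 0 < u i ^ 2 := pow_two_pos_of_ne_zero hi
    exact Finset.sum_pos' (fun j _ => by positivity) ⟨i, Finset.mem_univ i, this⟩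
  set n2 := Real.sqrt (∑ i, u i ^ 2) with hn2
  have hn2pos : 0 < n2 := Real.sqrt_pos.mpr hu2pos
  have hn2sq : n2 ^ 2 = ∑ i, u i ^ 2 := Real.sq_sqrt hu2pos.le
  set sd := Real.sqrt d with hsd
  have hsdpos : 0 < sd := Real.sqrt_pos.mpr (by exact_mod_cast Nat.lt_of_lt_of_le Nat.zero_lt_one hd)
  have hsdsq : sd ^ 2 = d := Real.sq_sqrt (by positivity)
  -- total sum of absolute inner products
  have htot : (∑ j : Fin d ⊕ Fin d, |∑ l, w j l * u l|) = (∑ i, |u i|) + ∑ i, |v i| := by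
    rw [Fintype.sum_sum_type]
    congr 1
    · exact Finset.sum_congr rfl fun i _ => by rw [hinl]
    · exact Finset.sum_congr rfl fun i _ => by rw [hinr]
  -- Kašin bound
  have hKu : n2 ≤ 4 * R ^ 2 / sd * ((∑ i, |v i|) + ∑ i, |u i|) := hK u
  -- sum of squares over all j
  have hsqtot : (∑ j : Fin d ⊕ Fin d, (∑ l, w j l * u l) ^ 2) = 2 * n2 ^ 2 := by
    rw [Fintype.sum_sum_type]
    have h1 : (∑ i, (∑ l, w (Sum.inl i) l * u l) ^ 2) = ∑ i, u i ^ 2 :=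
      Finset.sum_congr rfl fun i _ => by rw [hinl]
    have h2 : (∑ i, (∑ l, w (Sum.inr i) l * u l) ^ 2) = ∑ i, v i ^ 2 :=
      Finset.sum_congr rfl fun i _ => by rw [hinr]
    rw [h1, h2, hvu, hn2sq]; ring
  -- Cauchy–Schwarz on S
  set A := ∑ j ∈ S, |∑ l, w j l * u l| with hA
  have hCS : A ^ 2 ≤ (S.card : ℝ) * ∑ j ∈ S, (∑ l, w j l * u l) ^ 2 := by
    have := Finset.sum_mul_sq_le_sq_mul_sq S (fun _ => (1 : ℝ))
      (fun j => |∑ l, w j l * u l|)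
    simpa [hA, sq_abs] using this
  have hsub : (∑ j ∈ S, (∑ l, w j l * u l) ^ 2) ≤ ∑ j : Fin d ⊕ Fin d, (∑ l, w j l * u l) ^ 2 :=
    Finset.sum_le_univ_sum_of_nonneg fun j => by positivity
  have hcard0 : (0 : ℝ) ≤ S.card := by positivity
  have hA2 : A ^ 2 ≤ (S.card : ℝ) * (2 * n2 ^ 2) := by
    calc A ^ 2 ≤ (S.card : ℝ) * ∑ j ∈ S, (∑ l, w j l * u l) ^ 2 := hCS
      _ ≤ (S.card : ℝ) * (2 * n2 ^ 2) := by
          rw [← hsqtot]; exact mul_le_mul_of_nonneg_left hsub hcard0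
  -- lower bound on A
  have hAlb : sd * n2 / (8 * R ^ 2) ≤ A := by
    rw [htot] at hS
    have h1 : n2 * sd ≤ 4 * R ^ 2 * ((∑ i, |v i|) + ∑ i, |u i|) := by
      rw [div_mul_eq_mul_div, le_div_iff₀ hsdpos] at hKu
      linarith
    have hR2 : (0 : ℝ) < R ^ 2 := by positivity
    rw [div_le_iff₀ (by positivity)]
    nlinarith
  have hApos : 0 < A := lt_of_lt_of_le (by positivity) hAlb
  clear_value A n2 sd v
  have hkey : (d : ℝ) ≤ (S.card : ℝ) * (2 ^ 7 * R ^ 4) := by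
    clear hS hCS hsub htot hKu hsqtot hK hvu hu2pos hU hw1 hw2 hRb
    have hn2sqpos : (0:ℝ) < n2 ^ 2 := by positivity
    have h2 : (sd * n2 / (8 * R ^ 2)) ^ 2 ≤ A ^ 2 := by
      apply pow_le_pow_left₀ (by positivity) hAlb
    have h6 : sd ^ 2 * n2 ^ 2 ≤ A ^ 2 * (64 * R ^ 4) := by
      rw [div_pow, div_le_iff₀ (by positivity)] at h2
      nlinarith [h2]
    have hmul := mul_le_mul_of_nonneg_right hA2 (show (0:ℝ) ≤ 64 * R ^ 4 by positivity)
    have h7 : (d : ℝ) * n2 ^ 2 ≤ ((S.card : ℝ) * (2 ^ 7 * R ^ 4)) * n2 ^ 2 := by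
      rw [← hsdsq]
      nlinarith [h6, hmul]
    exact le_of_mul_le_mul_right h7 hn2sqpos
  have hgoal1 : (d : ℝ) / (2 ^ 7 * R ^ 4) ≤ S.card := by
    rw [div_le_iff₀ (by positivity)]
    linarith
  refine ⟨hgoal1, ?_⟩
  have hR4b := kasin_aux_numeric R hR0 hRb
  gcongr
  all_goals first
    | positivity
    | exact hR4b
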